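/- Let G be a chordal graph with clique tree T, and let a, b, c be three pairwise non-adjacent vertices. Then a is a middle of b and c (every path in G from b to c meets N(a)) if and only if for all maximal cliques Q_b containing b and Q_c containing c, some edge on the path in T between Q_b and Q_c has a label Q ∩ Q' with Q ∩ Q' ⊆ N(a). -/

import Mathlib

open SimpleGraph

variable {V : Type*}

/-- `S` separates `u` and `w` in `G`: every walk from `u` to `w` meets `S`. -/
def Separates (G : SimpleGraph V) (S : Set V) (u w : V) : Prop :=
  ∀ p : G.Walk u w, ∃ x ∈ p.support, x ∈ S

/-- `S` is a minimal `{u,w}`-separator. -/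
def IsMinUWSeparator (G : SimpleGraph V) (S : Set V) (u w : V) : Prop :=
  u ≠ w ∧ ¬ G.Adj u w ∧ u ∉ S ∧ w ∉ S ∧ Separates G S u w ∧
    ∀ S' ⊂ S, ¬ Separates G S' u w

/-- `S` is a minimal separator of `G`. -/
def IsMinSeparator (G : SimpleGraph V) (S : Set V) : Prop :=
  ∃ u w : V, IsMinUWSeparator G S u w

/-- A vertex is simplicial if its neighborhood is a clique. -/
def IsSimplicial (G : SimpleGraph V) (v : V) : Prop :=
  G.IsClique (G.neighborSet v)

/-- A maximal clique (as a vertex set). -/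
def IsMaxClique (G : SimpleGraph V) (s : Set V) : Prop :=
  G.IsClique s ∧ ∀ t : Set V, G.IsClique t → s ⊆ t → s = t

/-- A graph is chordal if it has no induced cycle of length at least 4. -/
def Chordal (G : SimpleGraph V) : Prop :=
  ∀ n : ℕ, 4 ≤ n → IsEmpty (SimpleGraph.cycleGraph n ↪g G)

/-- The type of maximal cliques of `G`. -/
abbrev MaxCliques (G : SimpleGraph V) := {s : Set V // IsMaxClique G s}

/-- `T` is a clique tree of `G`: a tree on the maximal cliques such that for each vertex
the cliques containing it induce a connected subgraph. -/
def IsCliqueTree (G : SimpleGraph V) (T : SimpleGraph (MaxCliques G)) : Prop :=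
  T.IsTree ∧ ∀ v : V, (T.induce {Q : MaxCliques G | v ∈ Q.1}).Connected

/-- The set `X` induces a path in `T` (assuming `T` is a tree: connected with max degree 2). -/
def InducesPath {α : Type*} (T : SimpleGraph α) (X : Set α) : Prop :=
  (T.induce X).Connected ∧ ∀ x : X, ((T.induce X).neighborSet x).ncard ≤ 2

/-- `T` is a clique path tree of `G`. -/
def IsCliquePathTree (G : SimpleGraph V) (T : SimpleGraph (MaxCliques G)) : Prop :=
  T.IsTree ∧ ∀ v : V, InducesPath T {Q : MaxCliques G | v ∈ Q.1}

/-- `G` is a path graph: the empty graph, or a graph admitting a clique path tree. -/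
def IsPathGraph (G : SimpleGraph V) : Prop :=
  IsEmpty V ∨ ∃ T : SimpleGraph (MaxCliques G), IsCliquePathTree G T

/-- `G` is an interval graph: intersection graph of closed real intervals. -/
def IsIntervalGraph (G : SimpleGraph V) : Prop :=
  ∃ f : V → Set ℝ, (∀ v, ∃ a b : ℝ, a ≤ b ∧ f v = Set.Icc a b) ∧
    ∀ u v : V, u ≠ v → (G.Adj u v ↔ (f u ∩ f v).Nonempty)

/-- `a` is a middle of `b, c`: every walk from `b` to `c` meets `N(a)`. -/
def IsMiddle (G : SimpleGraph V) (a b c : V) : Prop :=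
  ∀ p : G.Walk b c, ∃ x ∈ p.support, G.Adj a x

/-- `a, b, c` form an asteroidal triple. -/
def AsteroidalTriple (G : SimpleGraph V) (a b c : V) : Prop :=
  a ≠ b ∧ a ≠ c ∧ b ≠ c ∧ ¬ G.Adj a b ∧ ¬ G.Adj a c ∧ ¬ G.Adj b c ∧
  (∃ p : G.Walk b c, ∀ x ∈ p.support, ¬ G.Adj a x) ∧
  (∃ p : G.Walk a c, ∀ x ∈ p.support, ¬ G.Adj b x) ∧
  (∃ p : G.Walk a b, ∀ x ∈ p.support, ¬ G.Adj c x)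

/-- The closed neighborhood clique `Q_v` of a simplicial vertex. -/
def Qv (G : SimpleGraph V) (v : V) : Set V := insert v (G.neighborSet v)

/-- `S_v`: the vertices of `Q_v` having a neighbor outside `Q_v`. -/
def Sv (G : SimpleGraph V) (v : V) : Set V :=
  {x | x ∈ Qv G v ∧ ∃ y, y ∉ Qv G v ∧ G.Adj x y}

/-- A simplicial vertex is special if `S_v` is an inclusion-maximal minimal separator. -/
def IsSpecial (G : SimpleGraph V) (v : V) : Prop :=
  IsSimplicial G v ∧ IsMinSeparator G (Sv G v) ∧
    ∀ S : Set V, IsMinSeparator G S → Sv G v ⊆ S → S = Sv G v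

/-- Connected components of `G ∖ S` containing a vertex complete to `S`. -/
def CompleteComponents (G : SimpleGraph V) (S : Set V) :
    Set ((G.induce (Sᶜ : Set V)).ConnectedComponent) :=
  {C | ∃ x : (Sᶜ : Set V), (G.induce (Sᶜ : Set V)).connectedComponentMk x = C ∧
        S ⊆ G.neighborSet x.1}

/-- The wheel graph: an `n`-cycle plus a universal vertex (`none`). -/
def wheelGraph (n : ℕ) : SimpleGraph (Option (Fin n)) :=
  SimpleGraph.fromRel (fun a b =>
    (∃ i j : Fin n, a = some i ∧ b = some j ∧ (SimpleGraph.cycleGraph n).Adj i j) ∨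
    (a = none ∧ b ≠ none))

/-- `y` lies on the tree-path between `x` and `z` in `T`. -/
def OnTreePath {α : Type*} (T : SimpleGraph α) (x y z : α) : Prop :=
  ∃ p : T.Walk x z, p.IsPath ∧ y ∈ p.support


lemma exists_maxClique [Fintype V] (G : SimpleGraph V) {s : Set V} (hs : G.IsClique s) :
    ∃ M : MaxCliques G, s ⊆ M.1 := by
  obtain ⟨M, hM, hmax⟩ := Set.Finite.exists_maximalFor id {t : Set V | G.IsClique t ∧ s ⊆ t}
    (Set.toFinite _) ⟨s, hs, subset_rfl⟩
  exact ⟨⟨M, hM.1, fun t ht hsub => le_antisymm hsub (hmax ⟨ht, hM.2.trans hsub⟩ hsub)⟩, hM.2⟩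

lemma reach_of_mem {G : SimpleGraph V} {T : SimpleGraph (MaxCliques G)}
    (hT : IsCliqueTree G T) (Q Q' : MaxCliques G) {x : V}
    (hx : x ∉ Q.1 ∩ Q'.1) {R R' : MaxCliques G} (hR : x ∈ R.1) (hR' : x ∈ R'.1) :
    (T.deleteEdges {s(Q, Q')}).Reachable R R' := by
  obtain ⟨q⟩ := (hT.2 x).preconnected ⟨R, hR⟩ ⟨R', hR'⟩
  refine ⟨(q.map (SimpleGraph.Embedding.induce _).toHom).toDeleteEdges _ ?_⟩
  intro e he
  rw [SimpleGraph.Walk.edges_map] at he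
  obtain ⟨e', he', rfl⟩ := List.mem_map.mp he
  induction e' using Sym2.ind with
  | _ A B =>
    simp only [Sym2.map_pair_eq, Set.mem_singleton_iff, Sym2.eq_iff]
    rintro (⟨h1, h2⟩ | ⟨h1, h2⟩)
    · exact hx ⟨h1 ▸ A.2, h2 ▸ B.2⟩
    · exact hx ⟨h2 ▸ B.2, h1 ▸ A.2⟩

lemma walk_reach [Fintype V] {G : SimpleGraph V} {T : SimpleGraph (MaxCliques G)}
    (hT : IsCliqueTree G T) (Q Q' : MaxCliques G)
    {x y : V} (w : G.Walk x y) (hw : ∀ v ∈ w.support, v ∉ Q.1 ∩ Q'.1)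
    {R R' : MaxCliques G} (hR : x ∈ R.1) (hR' : y ∈ R'.1) :
    (T.deleteEdges {s(Q, Q')}).Reachable R R' := by
  induction w generalizing R with
  | nil => exact reach_of_mem hT Q Q' (hw _ (by simp)) hR hR'
  | @cons u z v h p ih =>
    obtain ⟨M, hM⟩ := exists_maxClique G (SimpleGraph.isClique_pair.mpr (fun _ => h))
    refine (reach_of_mem hT Q Q' (hw u (by simp)) hR (hM (by simp))).trans
      (ih (fun t ht => hw t (by simp [ht])) (hM (by simp)) hR')

lemma forward_aux {G : SimpleGraph V} {a c : V} (hac : ¬ G.Adj a c)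
    {T : SimpleGraph (MaxCliques G)} :
    ∀ {Q Qc : MaxCliques G} (p : T.Walk Q Qc), c ∈ Qc.1 →
    (∀ A B : MaxCliques G, s(A, B) ∈ p.edges → ¬ (A.1 ∩ B.1 ⊆ G.neighborSet a)) →
    ∀ u ∈ Q.1, ¬ G.Adj a u → ∃ w : G.Walk u c, ∀ x ∈ w.support, ¬ G.Adj a x := by
  intro Q Qc p
  induction p with
  | @nil Q =>
    intro hc _ u hu hau
    by_cases huc : u = c
    · subst huc; exact ⟨SimpleGraph.Walk.nil, by simpa using hau⟩
    · exact ⟨SimpleGraph.Walk.cons (Q.2.1 hu hc huc) SimpleGraph.Walk.nil, by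
        intro x hx
        simp only [SimpleGraph.Walk.support_cons, SimpleGraph.Walk.support_nil,
          List.mem_cons, List.mem_singleton] at hx
        rcases hx with rfl | rfl | h
        · exact hau
        · exact hac
        · exact absurd h (by simp)⟩
  | @cons Q Q1 Qc h q ih =>
    intro hc hedges u hu hau
    obtain ⟨xx, hxmem, hxnot⟩ := Set.not_subset.mp
      (hedges Q Q1 (by simp [SimpleGraph.Walk.edges_cons]))
    have hxadj : ¬ G.Adj a xx := fun hh => hxnot hh
    obtain ⟨w, hwsup⟩ := ih hc
      (fun A B hAB => hedges A B (by simp [SimpleGraph.Walk.edges_cons, hAB]))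
      xx hxmem.2 hxadj
    by_cases hux : u = xx
    · subst hux; exact ⟨w, hwsup⟩
    · refine ⟨SimpleGraph.Walk.cons (Q.2.1 hu hxmem.1 hux) w, ?_⟩
      intro y hy
      simp only [SimpleGraph.Walk.support_cons, List.mem_cons] at hy
      rcases hy with rfl | hy'
      · exact hau
      · exact hwsup y hy'

theorem stmt13 [Fintype V] (G : SimpleGraph V) (hG : Chordal G)
    (T : SimpleGraph (MaxCliques G)) (hT : IsCliqueTree G T) (a b c : V)
    (hab : ¬ G.Adj a b) (hac : ¬ G.Adj a c) (hbc : ¬ G.Adj b c)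
    (hab' : a ≠ b) (hac' : a ≠ c) (hbc' : b ≠ c) :
    IsMiddle G a b c ↔
      ∀ Qb Qc : MaxCliques G, b ∈ Qb.1 → c ∈ Qc.1 →
        ∀ p : T.Walk Qb Qc, p.IsPath →
          ∃ Q Q' : MaxCliques G, s(Q, Q') ∈ p.edges ∧ Q.1 ∩ Q'.1 ⊆ G.neighborSet a := by
  constructor
  · intro hmid Qb Qc hb hc p hp
    by_contra hcon
    push_neg at hcon
    obtain ⟨w, hw⟩ := forward_aux hac p hc hcon b hb (fun h => hab h)
    obtain ⟨x, hx, hadj⟩ := hmid w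
    exact hw x hx hadj
  · intro H w
    have : DecidableEq (MaxCliques G) := Classical.decEq _
    obtain ⟨Qb, hbQb⟩ := exists_maxClique G (G.isClique_singleton b)
    obtain ⟨Qc, hcQc⟩ := exists_maxClique G (G.isClique_singleton c)
    obtain ⟨p0⟩ := hT.1.isConnected.preconnected Qb Qc
    obtain ⟨Q, Q', he, hsub⟩ := H Qb Qc (hbQb rfl) (hcQc rfl) p0.toPath.1 p0.toPath.2
    by_contra hcon
    push_neg at hcon
    have hw' : ∀ v ∈ w.support, v ∉ Q.1 ∩ Q'.1 := fun v hv hvS => hcon v hv (hsub hvS)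
    obtain ⟨q0⟩ := walk_reach hT Q Q' w hw' (hbQb rfl) (hcQc rfl)
    have hle : ∀ e ∈ q0.toPath.1.edges, e ∈ T.edgeSet := by
      intro e hee
      have h3 := q0.toPath.1.edges_subset_edgeSet hee
      rw [SimpleGraph.edgeSet_deleteEdges] at h3
      exact h3.1
    have hqp : (q0.toPath.1.transfer T hle).IsPath := q0.toPath.2.transfer hle
    obtain ⟨up, -, huniq⟩ := hT.1.existsUnique_path Qb Qc
    have h1 : p0.toPath.1 = up := huniq _ p0.toPath.2
    have h2 : q0.toPath.1.transfer T hle = up := huniq _ hqp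
    have he2 : s(Q, Q') ∈ q0.toPath.1.edges := by
      rw [← SimpleGraph.Walk.edges_transfer q0.toPath.1 hle, h2, ← h1]
      exact he
    have := q0.toPath.1.edges_subset_edgeSet he2
    rw [SimpleGraph.edgeSet_deleteEdges] at this
    exact this.2 rfl
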